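/- Under the penny construction with inequalities (1)–(3) and E₀ < 0, for every nonempty T ⊆ Fin n with |T| = k, the total energy satisfies E(T) < (k−1)·E₀ if and only if every two distinct indices i, j ∈ T satisfy dist(x i, x j) ≥ √2·n (i.e., T corresponds to an independent set in the tangency graph). -/

import Mathlib

/-- The total Buckingham–Coulomb interaction (per direction) between two unit-charge ion
pairs whose planar centres are at distance `r`, one ion of each pair at height `0` and
the other at height `1`. -/
noncomputable def pennyF (A11 B11 C11 A12 B12 C12 r : ℝ) : ℝ :=
  A11 * Real.exp (-(B11 * r)) - C11 / r ^ 6 + 1 / r +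
    A12 * Real.exp (-(B12 * Real.sqrt (r ^ 2 + 1))) - C12 / (r ^ 2 + 1) ^ 3 -
    1 / Real.sqrt (r ^ 2 + 1)

/-- The internal Buckingham–Coulomb energy of a single pair: two opposite unit charges at
distance `1`. -/
noncomputable def pennyE0 (A12 B12 C12 : ℝ) : ℝ := A12 * Real.exp (-B12) - C12 - 1

/-- Position in `ℝ³` of the ion `(i, b)`: the planar point `x i` at height `0` if
`b = false` (positive ion) and at height `1` if `b = true` (negative ion). -/
noncomputable def pennyPos {n : ℕ} (x : Fin n → EuclideanSpace ℝ (Fin 2))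
    (q : Fin n × Bool) : EuclideanSpace ℝ (Fin 3) :=
  WithLp.toLp 2 ![x q.1 0, x q.1 1, if q.2 then 1 else 0]

/-- The Buckingham–Coulomb energy between two distinct ions: same-sign ions use the
parameters `(A11, B11, C11)` and Coulomb term `+1/r`, opposite-sign ions use
`(A12, B12, C12)` and Coulomb term `−1/r`. -/
noncomputable def pennyU (A11 B11 C11 A12 B12 C12 : ℝ) {n : ℕ}
    (x : Fin n → EuclideanSpace ℝ (Fin 2)) (a b : Fin n × Bool) : ℝ :=
  if a.2 = b.2 then
    A11 * Real.exp (-(B11 * dist (pennyPos x a) (pennyPos x b))) -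
      C11 / dist (pennyPos x a) (pennyPos x b) ^ 6 +
      1 / dist (pennyPos x a) (pennyPos x b)
  else
    A12 * Real.exp (-(B12 * dist (pennyPos x a) (pennyPos x b))) -
      C12 / dist (pennyPos x a) (pennyPos x b) ^ 6 -
      1 / dist (pennyPos x a) (pennyPos x b)

/-- The total energy of a set `S` of ions: the sum of pairwise energies over all
unordered pairs of distinct ions in `S` (realised as half the ordered sum). -/
noncomputable def pennyES (A11 B11 C11 A12 B12 C12 : ℝ) {n : ℕ}
    (x : Fin n → EuclideanSpace ℝ (Fin 2)) (S : Finset (Fin n × Bool)) : ℝ :=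
  (∑ p ∈ S.offDiag, pennyU A11 B11 C11 A12 B12 C12 x p.1 p.2) / 2

/-- The total energy of the `2|T|` ions whose indices lie in `T`. -/
noncomputable def pennyET (A11 B11 C11 A12 B12 C12 : ℝ) {n : ℕ}
    (x : Fin n → EuclideanSpace ℝ (Fin 2)) (T : Finset (Fin n)) : ℝ :=
  pennyES A11 B11 C11 A12 B12 C12 x (T ×ˢ (Finset.univ : Finset Bool))

lemma dist_pennyPos {n : ℕ} (x : Fin n → EuclideanSpace ℝ (Fin 2)) (i j : Fin n) (b b' : Bool) :
    dist (pennyPos x (i, b)) (pennyPos x (j, b')) =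
      Real.sqrt (dist (x i) (x j) ^ 2 + (if b = b' then 0 else 1)) := by
  have h2 : dist (x i) (x j) ^ 2 = (x i 0 - x j 0) ^ 2 + (x i 1 - x j 1) ^ 2 := by
    rw [EuclideanSpace.dist_eq, Real.sq_sqrt (by positivity)]
    simp [Fin.sum_univ_two, Real.dist_eq, sq_abs]
  rw [EuclideanSpace.dist_eq, h2]
  cases b <;> cases b' <;>
    simp [pennyPos, Fin.sum_univ_three, Real.dist_eq, sq_abs]
lemma sum_bool_pennyU (A11 B11 C11 A12 B12 C12 : ℝ) {n : ℕ}
    (x : Fin n → EuclideanSpace ℝ (Fin 2)) (i j : Fin n) :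
    ∑ b : Bool, ∑ b' : Bool, pennyU A11 B11 C11 A12 B12 C12 x (i, b) (j, b') =
      2 * pennyF A11 B11 C11 A12 B12 C12 (dist (x i) (x j)) := by
  set d := dist (x i) (x j) with hd
  have hd0 : 0 ≤ d := dist_nonneg
  have hs : Real.sqrt (d ^ 2 + 0) = d := by
    rw [add_zero, Real.sqrt_sq hd0]
  have hs1 : Real.sqrt (d ^ 2 + 1) ^ 6 = (d ^ 2 + 1) ^ 3 := by
    rw [show (6 : ℕ) = 2 * 3 from rfl, pow_mul, Real.sq_sqrt (by positivity)]
  simp only [Fintype.sum_bool, pennyU, dist_pennyPos, Bool.true_eq_false, Bool.false_eq_true,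
    if_false, if_true, reduceIte]
  simp only [← hd, hs, hs1]
  rw [pennyF]
  ring

lemma pennyET_eq (A11 B11 C11 A12 B12 C12 : ℝ) {n : ℕ}
    (x : Fin n → EuclideanSpace ℝ (Fin 2)) (T : Finset (Fin n)) :
    pennyET A11 B11 C11 A12 B12 C12 x T =
      T.card * pennyE0 A12 B12 C12 +
        ∑ p ∈ T.offDiag, pennyF A11 B11 C11 A12 B12 C12 (dist (x p.1) (x p.2)) := by
  classical
  set U := pennyU A11 B11 C11 A12 B12 C12 x with hU
  set F := pennyF A11 B11 C11 A12 B12 C12 with hF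
  set S := T ×ˢ (Finset.univ : Finset Bool) with hS
  have hprod : ∑ p ∈ S ×ˢ S, U p.1 p.2 =
      ∑ i ∈ T, ∑ j ∈ T, 2 * F (dist (x i) (x j)) := by
    simp only [hS, Finset.sum_product]
    refine Finset.sum_congr rfl fun i _ => ?_
    rw [Finset.sum_comm]
    exact Finset.sum_congr rfl fun j _ => sum_bool_pennyU A11 B11 C11 A12 B12 C12 x i j
  have hsplitS : ∑ p ∈ S ×ˢ S, U p.1 p.2 =
      ∑ p ∈ S.diag, U p.1 p.2 + ∑ p ∈ S.offDiag, U p.1 p.2 := by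
    rw [← Finset.sum_union (Finset.disjoint_diag_offDiag S), Finset.diag_union_offDiag]
  have hdiagS : ∑ p ∈ S.diag, U p.1 p.2 = T.card * (2 * A11) := by
    rw [Finset.sum_diag]
    have h1 : ∀ a : Fin n × Bool, U a a = A11 := by
      intro a
      rw [hU, pennyU]
      simp [Real.exp_zero]
    rw [Finset.sum_congr rfl fun a _ => h1 a, hS]
    simp [Finset.sum_const, mul_comm]
    ring
  have hF0 : F 0 = A11 + pennyE0 A12 B12 C12 := by
    rw [hF, pennyF, pennyE0]
    norm_num
    ring
  have hsplitT : ∑ i ∈ T, ∑ j ∈ T, 2 * F (dist (x i) (x j)) =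
      T.card * (2 * (A11 + pennyE0 A12 B12 C12)) +
        ∑ p ∈ T.offDiag, 2 * F (dist (x p.1) (x p.2)) := by
    rw [← Finset.sum_product']
    rw [← Finset.diag_union_offDiag T, Finset.sum_union (Finset.disjoint_diag_offDiag T)]
    congr 1
    rw [Finset.sum_diag]
    have : ∀ i : Fin n, 2 * F (dist (x i) (x i)) = 2 * (A11 + pennyE0 A12 B12 C12) := by
      intro i; rw [dist_self, hF0]
    rw [Finset.sum_congr rfl fun i _ => this i, Finset.sum_const, nsmul_eq_mul]
  have hoff : ∑ p ∈ S.offDiag, U p.1 p.2 =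
      2 * (T.card * pennyE0 A12 B12 C12) + ∑ p ∈ T.offDiag, 2 * F (dist (x p.1) (x p.2)) := by
    have := hsplitS
    rw [hprod, hsplitT, hdiagS] at this
    linarith
  rw [pennyET, pennyES, ← hU, ← hS, hoff, ← Finset.mul_sum]
  ring

/-- Under the penny construction with inequalities (1)–(3) and `E₀ < 0`: for every
nonempty `T ⊆ Fin n` of cardinality `k`, the total energy of the ions indexed by `T` is
strictly below `(k−1)·E₀` iff every two distinct indices of `T` are at planar distance at
least `√2·n`, i.e. `T` is independent in the tangency graph. -/
theorem penny_energy_lt_iff_independent {n : ℕ} (hn : 3 ≤ n) (x : Fin n → EuclideanSpace ℝ (Fin 2))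
    (hx : ∀ i j : Fin n, i ≠ j →
      dist (x i) (x j) = (n : ℝ) ∨ Real.sqrt 2 * n ≤ dist (x i) (x j))
    (A11 B11 C11 A12 B12 C12 : ℝ)
    (hA11 : 0 ≤ A11) (hB11 : 0 ≤ B11) (hC11 : 0 ≤ C11)
    (hA12 : 0 ≤ A12) (hB12 : 0 ≤ B12) (hC12 : 0 ≤ C12)
    (hE0 : pennyE0 A12 B12 C12 < 0)
    (h1 : -pennyE0 A12 B12 C12 ≤ pennyF A11 B11 C11 A12 B12 C12 n)
    (h2 : ∀ r : ℝ, Real.sqrt 2 * n ≤ r →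
      (n : ℝ) ^ 2 * |pennyF A11 B11 C11 A12 B12 C12 r| ≤ -pennyE0 A12 B12 C12)
    (h3 : ∀ r : ℝ, Real.sqrt 2 * n ≤ r → 0 < pennyF A11 B11 C11 A12 B12 C12 r)
    (T : Finset (Fin n)) (hT : T.Nonempty) (k : ℕ) (hk : T.card = k) :
    pennyET A11 B11 C11 A12 B12 C12 x T < ((k : ℝ) - 1) * pennyE0 A12 B12 C12 ↔
      ∀ i ∈ T, ∀ j ∈ T, i ≠ j → Real.sqrt 2 * n ≤ dist (x i) (x j) := by
  classical
  have hnpos : 0 < n := by omega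
  have hnR : (0 : ℝ) < n := by exact_mod_cast hnpos
  rw [pennyET_eq, hk]
  constructor
  · intro hlt i hi j hj hij
    by_contra hcon
    have hijn : dist (x i) (x j) = (n : ℝ) := (hx i j hij).resolve_right hcon
    have hpos : ∀ p ∈ T.offDiag, 0 ≤ pennyF A11 B11 C11 A12 B12 C12 (dist (x p.1) (x p.2)) := by
      intro p hp
      obtain ⟨h1p, h2p, h3p⟩ := Finset.mem_offDiag.mp hp
      rcases hx p.1 p.2 h3p with h | h
      · rw [h]; linarith
      · exact (h3 _ h).le
    have hmem : (i, j) ∈ T.offDiag := Finset.mem_offDiag.mpr ⟨hi, hj, hij⟩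
    have hsingle := Finset.single_le_sum hpos hmem
    rw [hijn] at hsingle
    linarith
  · intro hind
    have hub : ∀ p ∈ T.offDiag, pennyF A11 B11 C11 A12 B12 C12 (dist (x p.1) (x p.2)) ≤
        -pennyE0 A12 B12 C12 / (n : ℝ) ^ 2 := by
      intro p hp
      obtain ⟨h1p, h2p, h3p⟩ := Finset.mem_offDiag.mp hp
      have h2' := h2 _ (hind _ h1p _ h2p h3p)
      have habs : |pennyF A11 B11 C11 A12 B12 C12 (dist (x p.1) (x p.2))| ≤
          -pennyE0 A12 B12 C12 / (n : ℝ) ^ 2 := by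
        rw [le_div_iff₀ (by positivity)]
        linarith [h2']
      exact (le_abs_self _).trans habs
    have hsum := Finset.sum_le_card_nsmul T.offDiag _ _ hub
    rw [nsmul_eq_mul] at hsum
    have hklen : T.card ≤ n := by
      have := Finset.card_le_univ T
      simpa using this
    have hcardlt : T.offDiag.card < n * n := by
      rw [Finset.offDiag_card]
      have h4 : T.card * T.card - T.card < T.card * T.card :=
        Nat.sub_lt (Nat.mul_pos (Finset.card_pos.mpr hT) (Finset.card_pos.mpr hT))
          (Finset.card_pos.mpr hT)
      exact lt_of_lt_of_le h4 (Nat.mul_le_mul hklen hklen)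
    have hcast : (T.offDiag.card : ℝ) < (n : ℝ) ^ 2 := by
      have : (T.offDiag.card : ℝ) < (n : ℝ) * n := by exact_mod_cast hcardlt
      nlinarith
    have hE0' : (0 : ℝ) < -pennyE0 A12 B12 C12 := by linarith
    have hstep : (T.offDiag.card : ℝ) * (-pennyE0 A12 B12 C12 / (n : ℝ) ^ 2) <
        (n : ℝ) ^ 2 * (-pennyE0 A12 B12 C12 / (n : ℝ) ^ 2) :=
      mul_lt_mul_of_pos_right hcast (by positivity)
    have heq : (n : ℝ) ^ 2 * (-pennyE0 A12 B12 C12 / (n : ℝ) ^ 2) = -pennyE0 A12 B12 C12 := by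
      field_simp
    linarith
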